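/- Let C and C̃ be positive self-adjoint bounded linear operators on a real Hilbert space H and let λ > 0. If ‖(C − C̃) ∘ (C + λI)^{-1}‖_op ≤ 3/4, then C̃ + λI is a continuous linear bijection of H and ‖C^{1/2} ∘ (C̃ + λI)^{-1}‖_op ≤ 4·‖C^{1/2} ∘ (C + λI)^{-1}‖_op ≤ 2/√λ, where C^{1/2} denotes the positive square root of C. -/

import Mathlib

/-- let `C`, `C̃` be positive self-adjoint bounded operators on a real
Hilbert space and `λ > 0`. If `‖(C − C̃) ∘ (C + λI)⁻¹‖_op ≤ 3/4`, then `C̃ + λI` is a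
continuous linear bijection of `H` and
`‖C^{1/2} ∘ (C̃ + λI)⁻¹‖_op ≤ 4·‖C^{1/2} ∘ (C + λI)⁻¹‖_op ≤ 2/√λ`,
where `C^{1/2}` is the (unique) positive self-adjoint square root of `C`. -/
theorem statement8
    {H : Type*} [NormedAddCommGroup H] [InnerProductSpace ℝ H] [CompleteSpace H]
    (C Ctilde : H →L[ℝ] H) (hC : C.IsPositive) (hCt : Ctilde.IsPositive)
    -- `S` is the positive self-adjoint square root of `C`
    (S : H →L[ℝ] H) (hS : S.IsPositive) (hSsq : S ∘L S = C)
    (lam : ℝ) (hlam : 0 < lam)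
    -- `e` realizes the continuous linear bijection `C + λI`
    (e : H ≃L[ℝ] H) (he : ∀ x : H, e x = C x + lam • x)
    (hsmall : ‖(C - Ctilde) ∘L (e.symm : H →L[ℝ] H)‖ ≤ 3 / 4) :
    ∃ et : H ≃L[ℝ] H,
      (∀ x : H, et x = Ctilde x + lam • x) ∧
      ‖S ∘L (et.symm : H →L[ℝ] H)‖ ≤ 4 * ‖S ∘L (e.symm : H →L[ℝ] H)‖ ∧
      4 * ‖S ∘L (e.symm : H →L[ℝ] H)‖ ≤ 2 / Real.sqrt lam := by
  set D : H →L[ℝ] H := (C - Ctilde) ∘L (e.symm : H →L[ℝ] H) with hD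
  have hDlt : ‖D‖ < 1 := lt_of_le_of_lt hsmall (by norm_num)
  set u : (H →L[ℝ] H)ˣ := Units.oneSub D hDlt with hu
  set f : H ≃L[ℝ] H := ContinuousLinearEquiv.ofUnit u with hf
  refine ⟨e.trans f, ?_, ?_, ?_⟩
  · intro x
    have h1 : (e.trans f) x = e x - D (e x) := rfl
    have h2 : D (e x) = C x - Ctilde x := by
      simp [hD]
    rw [h1, h2, he]
    abel
  · -- norm of u⁻¹
    have hcomp : S ∘L ((e.trans f).symm : H →L[ℝ] H)
        = (S ∘L (e.symm : H →L[ℝ] H)) ∘L (↑u⁻¹ : H →L[ℝ] H) := by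
      ext x; rfl
    rw [hcomp]
    have hub : ‖(↑u⁻¹ : H →L[ℝ] H)‖ ≤ 4 := by
      have h1 : ‖(↑u⁻¹ : H →L[ℝ] H)‖ ≤ ‖(1 : H →L[ℝ] H)‖ - 1 + (1 - ‖D‖)⁻¹ :=
        tsum_geometric_le_of_norm_lt_one D hDlt
      have h2 : ‖(1 : H →L[ℝ] H)‖ ≤ 1 := ContinuousLinearMap.norm_id_le
      have h3 : (1 - ‖D‖)⁻¹ ≤ 4 := by
        rw [inv_le_comm₀ (by linarith) (by norm_num)]
        linarith
      linarith
    calc ‖(S ∘L (e.symm : H →L[ℝ] H)) ∘L (↑u⁻¹ : H →L[ℝ] H)‖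
        ≤ ‖S ∘L (e.symm : H →L[ℝ] H)‖ * ‖(↑u⁻¹ : H →L[ℝ] H)‖ :=
          ContinuousLinearMap.opNorm_comp_le _ _
      _ ≤ 4 * ‖S ∘L (e.symm : H →L[ℝ] H)‖ := by
          rw [mul_comm]
          exact mul_le_mul_of_nonneg_right hub (norm_nonneg _)
  · -- analytic bound: ‖S ∘ (C+λ)⁻¹‖ ≤ 1/(2√λ)
    have hsl : 0 < Real.sqrt lam := Real.sqrt_pos.mpr hlam
    have key : ‖S ∘L (e.symm : H →L[ℝ] H)‖ ≤ (2 * Real.sqrt lam)⁻¹ := by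
      apply ContinuousLinearMap.opNorm_le_bound _ (by positivity)
      intro x
      set y : H := e.symm x with hy
      have hxy : C y + lam • y = x := by rw [← he]; simp [hy]
      have hnorm2 : ‖S y‖ ^ 2 = inner ℝ y (C y) := by
        have hsym := hS.1
        have : (inner ℝ (S y) (S y) : ℝ) = inner ℝ y (S (S y)) := hsym y (S y)
        rw [← hSsq]
        rw [real_inner_self_eq_norm_sq] at this
        simpa using this
      have hCy : inner ℝ y (C y) = (inner ℝ y x : ℝ) - lam * ‖y‖ ^ 2 := by
        have : (inner ℝ y x : ℝ) = inner ℝ y (C y) + lam * inner ℝ y y := by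
          rw [← hxy, inner_add_right, real_inner_smul_right]
        rw [real_inner_self_eq_norm_sq] at this
        linarith
      have hcs : (inner ℝ y x : ℝ) ≤ ‖y‖ * ‖x‖ := real_inner_le_norm y x
      have hsq : ‖S y‖ ^ 2 ≤ (‖x‖ / (2 * Real.sqrt lam)) ^ 2 := by
        have hxs : (‖x‖ / (2 * Real.sqrt lam)) ^ 2 = ‖x‖ ^ 2 / (4 * lam) := by
          rw [div_pow]
          congr 1
          rw [mul_pow, Real.sq_sqrt hlam.le]
          ring
        rw [hxs, hnorm2, hCy]
        rw [le_div_iff₀ (by linarith)]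
        nlinarith [sq_nonneg (‖x‖ - 2 * lam * ‖y‖), hcs]
      have := Real.sqrt_le_sqrt hsq
      rw [Real.sqrt_sq (norm_nonneg _), Real.sqrt_sq (by positivity)] at this
      calc ‖(S ∘L (e.symm : H →L[ℝ] H)) x‖ = ‖S y‖ := rfl
        _ ≤ ‖x‖ / (2 * Real.sqrt lam) := this
        _ = (2 * Real.sqrt lam)⁻¹ * ‖x‖ := by ring
    calc 4 * ‖S ∘L (e.symm : H →L[ℝ] H)‖ ≤ 4 * (2 * Real.sqrt lam)⁻¹ := by linarith
      _ = 2 / Real.sqrt lam := by field_simp; ring
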